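/- With B satisfying (H1)-(H2)-(H3), α_0 ∈ P(B_{R_0}), K = K_{R_T}, M = M_{R_T}, and λ := 5M/2 + K, the map Φ_{α_0} defined on E_T = C([0,T], (P(B_{R_T}), W_2)) by Φ_{α_0}(α)_t := (X_t^α)_# α_0, where X_t^α is the flow of the vector field (t,x) ↦ B[α_t](x), is ½-Lipschitz for the distance dist(α¹,α²) = sup_t e^{−λt} W_2(α¹_t, α²_t); in particular it is a contraction and admits a unique fixed point. -/

import Mathlib

open MeasureTheory Real Set Filter Metric
open scoped ENNReal NNReal

noncomputable section

/-- `ℝ^d` with the Euclidean norm. -/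
abbrev Rd (d : ℕ) := EuclideanSpace ℝ (Fin d)

/-- `γ` is a transport plan (coupling) between `α` and `β`. -/
def IsCoupling {d : ℕ} (γ : Measure (Rd d × Rd d)) (α β : Measure (Rd d)) : Prop :=
  γ.map Prod.fst = α ∧ γ.map Prod.snd = β

/-- Squared 2-Wasserstein distance. -/
def W2sq {d : ℕ} (α β : Measure (Rd d)) : ℝ :=
  sInf {c | ∃ γ : Measure (Rd d × Rd d), IsCoupling γ α β ∧
    c = ∫ p, ‖p.1 - p.2‖ ^ 2 ∂γ}

/-- 2-Wasserstein distance. -/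
def W2 {d : ℕ} (α β : Measure (Rd d)) : ℝ := Real.sqrt (W2sq α β)

/-- `α` is supported in the closed ball of radius `R` centered at the origin. -/
def SuppIn {d : ℕ} (α : Measure (Rd d)) (R : ℝ) : Prop :=
  α (Metric.closedBall (0 : Rd d) R)ᶜ = 0

/-- Probability measure supported in the closed ball of radius `R`. -/
def ProbOn {d : ℕ} (α : Measure (Rd d)) (R : ℝ) : Prop :=
  IsProbabilityMeasure α ∧ SuppIn α R

/-- Compactly supported probability measure. -/
def IsCptProb {d : ℕ} (α : Measure (Rd d)) : Prop :=
  IsProbabilityMeasure α ∧ ∃ R : ℝ, SuppIn α R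

/-- Continuity of a curve of measures on `[0,T]` with respect to `W₂`. -/
def W2ContOn {d : ℕ} (α : ℝ → Measure (Rd d)) (T : ℝ) : Prop :=
  ∀ t ∈ Icc (0:ℝ) T, ∀ δ > (0:ℝ), ∃ η > (0:ℝ),
    ∀ s ∈ Icc (0:ℝ) T, |s - t| < η → W2 (α s) (α t) < δ

open Classical in
/-- Relative entropy `H(p|q)`, equal to `⊤` if `p` is not absolutely continuous w.r.t. `q`. -/
def relEntropy {d : ℕ} (p q : Measure (Rd d × Rd d)) : EReal :=
  if p ≪ q then ((∫ z, Real.log ((p.rnDeriv q z).toReal) ∂p : ℝ) : EReal) else ⊤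

/-- The entropic transport cost of a plan `γ` between `α` and `μ`:
`½∫|x−y|² dγ + ε H(γ | α⊗μ)`. -/
def entCost {d : ℕ} (ε : ℝ) (α μ : Measure (Rd d)) (γ : Measure (Rd d × Rd d)) : EReal :=
  (((∫ p, ‖p.1 - p.2‖ ^ 2 ∂γ) / 2 : ℝ) : EReal) + (ε : EReal) * relEntropy γ (α.prod μ)

/-- The entropic optimal transport value `OT_ε(α, μ)`. -/
def OTeps {d : ℕ} (ε : ℝ) (α μ : Measure (Rd d)) : EReal :=
  sInf {c | ∃ γ, IsCoupling γ α μ ∧ c = entCost ε α μ γ}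

/-- Hypothesis (H1): linear growth of `B[α]` uniformly in `α`. -/
def H1 {d : ℕ} (B : Measure (Rd d) → Rd d → Rd d) (C : ℝ) : Prop :=
  ∀ α : Measure (Rd d), IsCptProb α → ∀ x, ‖B α x‖ ≤ C * (1 + ‖x‖)

/-- `B[α]` is `K`-Lipschitz on the ball of radius `R`, for all `α ∈ P(B_R)`. -/
def LipOnBall {d : ℕ} (B : Measure (Rd d) → Rd d → Rd d) (R K : ℝ) : Prop :=
  ∀ α : Measure (Rd d), ProbOn α R →
    ∀ x ∈ Metric.closedBall (0 : Rd d) R, ∀ y ∈ Metric.closedBall (0 : Rd d) R,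
      ‖B α x - B α y‖ ≤ K * ‖x - y‖

/-- `α ↦ B[α]` is `M`-Lipschitz from `(P(B_R), W₂)` to `L^∞(B_R)`. -/
def W2LipOnBall {d : ℕ} (B : Measure (Rd d) → Rd d → Rd d) (R M : ℝ) : Prop :=
  ∀ α₁ α₂ : Measure (Rd d), ProbOn α₁ R → ProbOn α₂ R →
    ∀ x ∈ Metric.closedBall (0 : Rd d) R, ‖B α₁ x - B α₂ x‖ ≤ M * W2 α₁ α₂

/-- Hypothesis (H2). -/
def H2 {d : ℕ} (B : Measure (Rd d) → Rd d → Rd d) : Prop :=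
  ∀ R > (0:ℝ), ∃ K : ℝ, LipOnBall B R K

/-- Hypothesis (H3). -/
def H3 {d : ℕ} (B : Measure (Rd d) → Rd d → Rd d) : Prop :=
  ∀ R > (0:ℝ), ∃ M : ℝ, W2LipOnBall B R M

/-- Weak (distributional) solution of `∂ₜα + div(α B[α]) = 0`, `α(0,·) = α₀` on `[0,T]`,
with values in `P(B_R)`. -/
def IsWeakSolB {d : ℕ} (B : Measure (Rd d) → Rd d → Rd d) (α0 : Measure (Rd d))
    (T R : ℝ) (α : ℝ → Measure (Rd d)) : Prop :=
  α 0 = α0 ∧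
  (∀ t ∈ Icc (0:ℝ) T, ProbOn (α t) R) ∧
  W2ContOn α T ∧
  ∀ f : ℝ → Rd d → ℝ, ContDiff ℝ 1 (fun p : ℝ × Rd d => f p.1 p.2) →
    (∫ t in Icc (0:ℝ) T, ∫ x, (deriv (fun s => f s x) t
        + (inner ℝ (B (α t) x) (gradient (f t) x) : ℝ)) ∂(α t))
      = (∫ x, f T x ∂(α T)) - ∫ x, f 0 x ∂α0

/-- The transport part of the weak formulation of (entropic) semi-geostrophic equations,
with test functions `f ∈ C¹([0,T]×ℝ^d)` and curve of plans `γ`. -/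
def SGWeakForm {d : ℕ} (A : Rd d →L[ℝ] Rd d) (T : ℝ) (α0 : Measure (Rd d))
    (α : ℝ → Measure (Rd d)) (γ : ℝ → Measure (Rd d × Rd d)) : Prop :=
  ∀ f : ℝ → Rd d → ℝ, ContDiff ℝ 1 (fun p : ℝ × Rd d => f p.1 p.2) →
    ((∫ t in Icc (0:ℝ) T, ∫ x, (deriv (fun s => f s x) t
        + (inner ℝ (A x) (gradient (f t) x) : ℝ)) ∂(α t))
     - ∫ t in Icc (0:ℝ) T, ∫ p, (inner ℝ (A p.2) (gradient (f t) p.1) : ℝ) ∂(γ t))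
      = (∫ x, f T x ∂(α T)) - ∫ x, f 0 x ∂α0

/-- Weak solution of the entropic semi-geostrophic system with parameter `ε`:
the plans `γ_t` solve `OT_ε(α_t, μ₀)` for a.e. `t`. -/
def IsEntropicSGSol {d : ℕ} (A : Rd d →L[ℝ] Rd d) (ε T R0 : ℝ)
    (α0 μ0 : Measure (Rd d)) (α : ℝ → Measure (Rd d)) : Prop :=
  α 0 = α0 ∧
  (∀ t ∈ Icc (0:ℝ) T, ProbOn (α t) (2 * R0 * Real.exp (‖A‖ * T))) ∧
  W2ContOn α T ∧
  ∃ γ : ℝ → Measure (Rd d × Rd d),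
    (∀ᵐ t ∂(volume.restrict (Icc (0:ℝ) T)),
      IsCoupling (γ t) (α t) μ0 ∧ entCost ε (α t) μ0 (γ t) = OTeps ε (α t) μ0) ∧
    SGWeakForm A T α0 α γ

/-- Weak solution of the (unregularized) semi-geostrophic type system:
the plans `γ_t` are optimal for `W₂²(α_t, μ₀)` for a.e. `t`. -/
def IsSGSol {d : ℕ} (A : Rd d →L[ℝ] Rd d) (T R0 : ℝ)
    (α0 μ0 : Measure (Rd d)) (α : ℝ → Measure (Rd d)) : Prop :=
  α 0 = α0 ∧
  (∀ t ∈ Icc (0:ℝ) T, ProbOn (α t) (2 * R0 * Real.exp (‖A‖ * T))) ∧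
  W2ContOn α T ∧
  ∃ γ : ℝ → Measure (Rd d × Rd d),
    (∀ᵐ t ∂(volume.restrict (Icc (0:ℝ) T)),
      IsCoupling (γ t) (α t) μ0 ∧ (∫ p, ‖p.1 - p.2‖ ^ 2 ∂(γ t)) = W2sq (α t) μ0) ∧
    SGWeakForm A T α0 α γ

/-- The distance `sup_{t ∈ [0,T]} e^{−λt} W₂(a_t, b_t)` on curves of measures. -/
def curveDist {d : ℕ} (lam T : ℝ) (a b : ℝ → Measure (Rd d)) : ℝ :=
  sSup {c | ∃ t ∈ Icc (0:ℝ) T, c = Real.exp (-lam * t) * W2 (a t) (b t)}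

/-- Membership in `E_T = C([0,T], (P(B_R), W₂))`. -/
def InE {d : ℕ} (T R : ℝ) (a : ℝ → Measure (Rd d)) : Prop :=
  (∀ t ∈ Icc (0:ℝ) T, ProbOn (a t) R) ∧ W2ContOn a T


/-! ### Auxiliary lemmas -/

section Aux

variable {d : ℕ}

lemma SG_hasDerivAt_exp_mul (c t : ℝ) :
    HasDerivAt (fun s : ℝ => Real.exp (c * s)) (c * Real.exp (c * t)) t := by
  convert ((hasDerivAt_id t).const_mul c).exp using 1 <;> simp [mul_comm]

lemma SG_w2sq_mem_nonneg {α β : Measure (Rd d)} {c : ℝ}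
    (hc : c ∈ {c | ∃ γ : Measure (Rd d × Rd d), IsCoupling γ α β ∧
      c = ∫ p, ‖p.1 - p.2‖ ^ 2 ∂γ}) : 0 ≤ c := by
  obtain ⟨γ, -, rfl⟩ := hc
  exact integral_nonneg fun p => by positivity

lemma SG_w2sq_le {α β : Measure (Rd d)} {γ : Measure (Rd d × Rd d)}
    (h : IsCoupling γ α β) : W2sq α β ≤ ∫ p, ‖p.1 - p.2‖ ^ 2 ∂γ :=
  csInf_le ⟨0, fun _ hc => SG_w2sq_mem_nonneg hc⟩ ⟨γ, h, rfl⟩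

lemma SG_w2_le_of_coupling {α β : Measure (Rd d)} {γ : Measure (Rd d × Rd d)} {c : ℝ}
    (h : IsCoupling γ α β) (hc : 0 ≤ c) (hint : ∫ p, ‖p.1 - p.2‖ ^ 2 ∂γ ≤ c ^ 2) :
    W2 α β ≤ c := by
  have : W2sq α β ≤ c ^ 2 := (SG_w2sq_le h).trans hint
  calc W2 α β ≤ Real.sqrt (c ^ 2) := Real.sqrt_le_sqrt this
  _ = c := by rw [Real.sqrt_sq hc]

lemma SG_w2_nonneg (α β : Measure (Rd d)) : 0 ≤ W2 α β := Real.sqrt_nonneg _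

lemma SG_integral_le_of_abs_le {Z : Type*} [MeasurableSpace Z] {μ : Measure Z}
    [IsProbabilityMeasure μ] {f : Z → ℝ} {c : ℝ}
    (hm : AEStronglyMeasurable f μ) (h : ∀ᵐ x ∂μ, |f x| ≤ c) : ∫ x, f x ∂μ ≤ c := by
  have hi : Integrable f μ :=
    (integrable_const c).mono' hm (by simpa [Real.norm_eq_abs] using h)
  calc ∫ x, f x ∂μ ≤ ∫ _x, c ∂μ :=
        integral_mono_ae hi (integrable_const c) (h.mono fun x hx => (abs_le.1 hx).2)
  _ = c := by simp

lemma SG_w2_self (α : Measure (Rd d)) : W2 α α = 0 := by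
  have hcoup : IsCoupling (α.map (fun x => (x, x))) α α := by
    constructor
    · rw [Measure.map_map measurable_fst (by measurability),
        show (Prod.fst ∘ fun x : Rd d => (x, x)) = id from rfl, Measure.map_id]
    · rw [Measure.map_map measurable_snd (by measurability),
        show (Prod.snd ∘ fun x : Rd d => (x, x)) = id from rfl, Measure.map_id]
  have h1 : W2sq α α ≤ 0 := by
    have := SG_w2sq_le hcoup
    have h2 := SG_w2sq_le hcoup
    rw [integral_map (φ := fun x : Rd d => (x, x)) (by measurability)
      (f := fun p : Rd d × Rd d => ‖p.1 - p.2‖ ^ 2) ((continuous_fst.sub continuous_snd).norm.pow 2).aestronglyMeasurable] at h2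
    simpa using h2
  have h1' : W2sq α α ≤ 0 := h1
  have : W2 α α ≤ 0 := by
    calc W2 α α ≤ Real.sqrt 0 := Real.sqrt_le_sqrt h1'
    _ = 0 := Real.sqrt_zero
  exact le_antisymm this (SG_w2_nonneg _ _)

lemma SG_coupling_isProb {γ : Measure (Rd d × Rd d)} {α β : Measure (Rd d)}
    (h : IsCoupling γ α β) (hα : IsProbabilityMeasure α) : IsProbabilityMeasure γ := by
  constructor
  have h1 : α Set.univ = 1 := measure_univ
  rw [← h.1, Measure.map_apply measurable_fst MeasurableSet.univ] at h1
  simpa using h1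

lemma SG_coupling_ae_mem {γ : Measure (Rd d × Rd d)} {α β : Measure (Rd d)} {R : ℝ}
    (h : IsCoupling γ α β) (hα : SuppIn α R) (hβ : SuppIn β R) :
    ∀ᵐ p ∂γ, p.1 ∈ Metric.closedBall (0 : Rd d) R ∧ p.2 ∈ Metric.closedBall (0 : Rd d) R := by
  rw [eventually_and]
  constructor
  · rw [MeasureTheory.ae_iff]
    have : {p : Rd d × Rd d | ¬ p.1 ∈ Metric.closedBall (0 : Rd d) R}
        = Prod.fst ⁻¹' (Metric.closedBall (0 : Rd d) R)ᶜ := rfl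
    rw [this, ← Measure.map_apply measurable_fst measurableSet_closedBall.compl, h.1]
    exact hα
  · rw [MeasureTheory.ae_iff]
    have : {p : Rd d × Rd d | ¬ p.2 ∈ Metric.closedBall (0 : Rd d) R}
        = Prod.snd ⁻¹' (Metric.closedBall (0 : Rd d) R)ᶜ := rfl
    rw [this, ← Measure.map_apply measurable_snd measurableSet_closedBall.compl, h.2]
    exact hβ

lemma SG_prod_coupling {α β : Measure (Rd d)} (hα : IsProbabilityMeasure α)
    (hβ : IsProbabilityMeasure β) : IsCoupling (α.prod β) α β := by
  constructor
  · rw [Measure.map_fst_prod]; simp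
  · rw [Measure.map_snd_prod]; simp

lemma SG_w2_le_of_probOn {α β : Measure (Rd d)} {R : ℝ} (hR : 0 ≤ R)
    (hα : ProbOn α R) (hβ : ProbOn β R) : W2 α β ≤ 2 * R := by
  haveI := hα.1; haveI := hβ.1
  have hcoup := SG_prod_coupling hα.1 hβ.1
  haveI : IsProbabilityMeasure (α.prod β) := SG_coupling_isProb hcoup hα.1
  apply SG_w2_le_of_coupling hcoup (by positivity)
  apply SG_integral_le_of_abs_le (f := fun p : Rd d × Rd d => ‖p.1 - p.2‖ ^ 2)
    ((continuous_fst.sub continuous_snd).norm.pow 2).aestronglyMeasurable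
  filter_upwards [SG_coupling_ae_mem hcoup hα.2 hβ.2] with p hp
  rcases hp with ⟨hp1, hp2⟩
  rw [mem_closedBall, dist_zero_right] at hp1 hp2
  have hn : ‖p.1 - p.2‖ ≤ 2 * R := by
    calc ‖p.1 - p.2‖ ≤ ‖p.1‖ + ‖p.2‖ := norm_sub_le _ _
    _ ≤ 2 * R := by linarith
  have h0 : (0:ℝ) ≤ ‖p.1 - p.2‖ := norm_nonneg _
  rw [abs_of_nonneg (by positivity)]
  nlinarith

lemma SG_w2_map_le {α : Measure (Rd d)} (hα : IsProbabilityMeasure α)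
    {f g : Rd d → Rd d} (hf : AEMeasurable f α) (hg : AEMeasurable g α) {c : ℝ} (hc : 0 ≤ c)
    (hb : ∀ᵐ x ∂α, ‖f x - g x‖ ≤ c) : W2 (α.map f) (α.map g) ≤ c := by
  haveI := hα
  have hpair : AEMeasurable (fun x => (f x, g x)) α := hf.prodMk hg
  have hcoup : IsCoupling (α.map (fun x => (f x, g x))) (α.map f) (α.map g) := by
    constructor
    · rw [AEMeasurable.map_map_of_aemeasurable measurable_fst.aemeasurable hpair]
      rfl
    · rw [AEMeasurable.map_map_of_aemeasurable measurable_snd.aemeasurable hpair]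
      rfl
  apply SG_w2_le_of_coupling hcoup hc
  rw [integral_map hpair (f := fun p : Rd d × Rd d => ‖p.1 - p.2‖ ^ 2) ((continuous_fst.sub continuous_snd).norm.pow 2).aestronglyMeasurable]
  apply SG_integral_le_of_abs_le
  · exact ((hf.sub hg).norm.pow_const 2).aestronglyMeasurable
  · filter_upwards [hb] with x hx
    rw [abs_of_nonneg (by positivity)]
    exact pow_le_pow_left₀ (norm_nonneg _) hx 2

end Aux

section Aux2

open scoped Topology

variable {d : ℕ}

lemma SG_curveDist_bddAbove {a b : ℝ → Measure (Rd d)} {lam T R : ℝ}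
    (hlam : 0 ≤ lam) (hR : 0 ≤ R)
    (ha : ∀ t ∈ Icc (0:ℝ) T, ProbOn (a t) R) (hb : ∀ t ∈ Icc (0:ℝ) T, ProbOn (b t) R) :
    BddAbove {c | ∃ t ∈ Icc (0:ℝ) T, c = Real.exp (-lam * t) * W2 (a t) (b t)} := by
  refine ⟨2 * R, ?_⟩
  rintro c ⟨t, ht, rfl⟩
  have he : Real.exp (-lam * t) ≤ 1 := by
    rw [Real.exp_le_one_iff]
    have : 0 ≤ lam * t := mul_nonneg hlam ht.1
    linarith
  have hw := SG_w2_le_of_probOn hR (ha t ht) (hb t ht)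
  have hw0 := SG_w2_nonneg (a t) (b t)
  calc Real.exp (-lam * t) * W2 (a t) (b t) ≤ 1 * W2 (a t) (b t) := by
        apply mul_le_mul_of_nonneg_right he hw0
  _ = W2 (a t) (b t) := one_mul _
  _ ≤ 2 * R := hw

lemma SG_le_curveDist {a b : ℝ → Measure (Rd d)} {lam T R : ℝ}
    (hlam : 0 ≤ lam) (hR : 0 ≤ R)
    (ha : ∀ t ∈ Icc (0:ℝ) T, ProbOn (a t) R) (hb : ∀ t ∈ Icc (0:ℝ) T, ProbOn (b t) R)
    {t : ℝ} (ht : t ∈ Icc (0:ℝ) T) :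
    Real.exp (-lam * t) * W2 (a t) (b t) ≤ curveDist lam T a b :=
  le_csSup (SG_curveDist_bddAbove hlam hR ha hb) ⟨t, ht, rfl⟩

lemma SG_curveDist_nonneg {a b : ℝ → Measure (Rd d)} {lam T R : ℝ}
    (hlam : 0 ≤ lam) (hR : 0 ≤ R) (hT : 0 ≤ T)
    (ha : ∀ t ∈ Icc (0:ℝ) T, ProbOn (a t) R) (hb : ∀ t ∈ Icc (0:ℝ) T, ProbOn (b t) R) :
    0 ≤ curveDist lam T a b := by
  have h0 : (0:ℝ) ∈ Icc (0:ℝ) T := ⟨le_refl _, hT⟩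
  have := SG_le_curveDist hlam hR ha hb h0
  have h1 : 0 ≤ Real.exp (-lam * 0) * W2 (a 0) (b 0) :=
    mul_nonneg (Real.exp_nonneg _) (SG_w2_nonneg _ _)
  linarith

lemma SG_w2_le_curveDist {a b : ℝ → Measure (Rd d)} {lam T R : ℝ}
    (hlam : 0 ≤ lam) (hR : 0 ≤ R)
    (ha : ∀ t ∈ Icc (0:ℝ) T, ProbOn (a t) R) (hb : ∀ t ∈ Icc (0:ℝ) T, ProbOn (b t) R)
    {t : ℝ} (ht : t ∈ Icc (0:ℝ) T) :
    W2 (a t) (b t) ≤ Real.exp (lam * t) * curveDist lam T a b := by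
  have h := SG_le_curveDist hlam hR ha hb ht
  have he : Real.exp (lam * t) * (Real.exp (-lam * t) * W2 (a t) (b t)) = W2 (a t) (b t) := by
    rw [← mul_assoc, ← Real.exp_add]
    simp
  calc W2 (a t) (b t) = Real.exp (lam * t) * (Real.exp (-lam * t) * W2 (a t) (b t)) := he.symm
  _ ≤ Real.exp (lam * t) * curveDist lam T a b :=
      mul_le_mul_of_nonneg_left h (Real.exp_nonneg _)

lemma SG_curveDist_le {a b : ℝ → Measure (Rd d)} {lam T c : ℝ} (hc : 0 ≤ c)
    (h : ∀ t ∈ Icc (0:ℝ) T, Real.exp (-lam * t) * W2 (a t) (b t) ≤ c) :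
    curveDist lam T a b ≤ c := by
  apply Real.sSup_le _ hc
  rintro x ⟨t, ht, rfl⟩
  exact h t ht

/-- Two probability measures supported in a ball with `W₂` distance zero are equal. -/
lemma SG_eq_of_w2_eq_zero {α β : Measure (Rd d)} {R : ℝ} (hR : 0 ≤ R)
    (hα : ProbOn α R) (hβ : ProbOn β R) (h : W2 α β = 0) : α = β := by
  haveI := hα.1; haveI := hβ.1
  have hS : W2sq α β = 0 := by
    have h0 : 0 ≤ W2sq α β := Real.sInf_nonneg fun _ hc => SG_w2sq_mem_nonneg hc
    have h1 : W2sq α β ≤ 0 := Real.sqrt_eq_zero'.1 h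
    linarith
  have hcoup0 : ∀ ε > (0:ℝ), ∃ γ : Measure (Rd d × Rd d),
      IsCoupling γ α β ∧ ∫ p, ‖p.1 - p.2‖ ^ 2 ∂γ < ε := by
    intro ε hε
    have hne : {c | ∃ γ : Measure (Rd d × Rd d), IsCoupling γ α β ∧
        c = ∫ p, ‖p.1 - p.2‖ ^ 2 ∂γ}.Nonempty :=
      ⟨_, α.prod β, SG_prod_coupling hα.1 hβ.1, rfl⟩
    have hlt : W2sq α β < ε := by rw [hS]; exact hε
    obtain ⟨x, hx, hxlt⟩ := (csInf_lt_iff ⟨0, fun _ hc => SG_w2sq_mem_nonneg hc⟩ hne).1 hlt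
    obtain ⟨γ, hγ, rfl⟩ := hx
    exact ⟨γ, hγ, hxlt⟩
  have key : ∀ (f : Rd d → ℝ) (L : ℝ), 0 ≤ L → Continuous f → (∀ z, |f z| ≤ 1) →
      (∀ z w, |f z - f w| ≤ L * ‖z - w‖) → ∫ z, f z ∂α = ∫ z, f z ∂β := by
    intro f L hL hfc hfb hfl
    have habs : ∀ ε > (0:ℝ), |∫ z, f z ∂α - ∫ z, f z ∂β| ≤ ε := by
      intro ε hε
      set δ : ℝ := ε / (2 * (L + 1)) with hδdef
      have hδ : 0 < δ := by positivity
      obtain ⟨γ, hγ, hcost⟩ := hcoup0 (δ ^ 2) (by positivity)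
      haveI : IsProbabilityMeasure γ := SG_coupling_isProb hγ hα.1
      have hcostm : AEStronglyMeasurable (fun p : Rd d × Rd d => ‖p.1 - p.2‖ ^ 2) γ :=
        ((continuous_fst.sub continuous_snd).norm.pow 2).aestronglyMeasurable
      have hcosti : Integrable (fun p : Rd d × Rd d => ‖p.1 - p.2‖ ^ 2) γ := by
        refine (integrable_const ((2 * R) ^ 2)).mono' hcostm ?_
        filter_upwards [SG_coupling_ae_mem hγ hα.2 hβ.2] with p hp
        rcases hp with ⟨hp1, hp2⟩
        rw [mem_closedBall, dist_zero_right] at hp1 hp2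
        have hn : ‖p.1 - p.2‖ ≤ 2 * R := by
          calc ‖p.1 - p.2‖ ≤ ‖p.1‖ + ‖p.2‖ := norm_sub_le _ _
          _ ≤ 2 * R := by linarith
        rw [Real.norm_eq_abs, abs_of_nonneg (by positivity)]
        nlinarith [norm_nonneg (p.1 - p.2)]
      have hint1 : Integrable (fun p : Rd d × Rd d => f p.1) γ := by
        refine (integrable_const 1).mono' (hfc.comp continuous_fst).aestronglyMeasurable ?_
        filter_upwards with p; simpa [Real.norm_eq_abs] using hfb p.1
      have hint2 : Integrable (fun p : Rd d × Rd d => f p.2) γ := by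
        refine (integrable_const 1).mono' (hfc.comp continuous_snd).aestronglyMeasurable ?_
        filter_upwards with p; simpa [Real.norm_eq_abs] using hfb p.2
      have hf1 : ∫ z, f z ∂α = ∫ p, f p.1 ∂γ := by
        rw [← hγ.1, integral_map measurable_fst.aemeasurable hfc.aestronglyMeasurable]
      have hf2 : ∫ z, f z ∂β = ∫ p, f p.2 ∂γ := by
        rw [← hγ.2, integral_map measurable_snd.aemeasurable hfc.aestronglyMeasurable]
      have hpt : ∀ p : Rd d × Rd d, |f p.1 - f p.2| ≤ L * δ + L / δ * ‖p.1 - p.2‖ ^ 2 := by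
        intro p
        have h1 := hfl p.1 p.2
        have hq : 0 ≤ L / δ := div_nonneg hL hδ.le
        have h2 : L * ‖p.1 - p.2‖ ≤ L * δ + L / δ * ‖p.1 - p.2‖ ^ 2 := by
          have hqδ : L / δ * δ = L := by field_simp
          have h3 : L / δ * δ * ‖p.1 - p.2‖ ≤ L / δ * δ * δ + L / δ * ‖p.1 - p.2‖ ^ 2 := by
            nlinarith [mul_nonneg hq (sq_nonneg (‖p.1 - p.2‖ - δ)),
              mul_nonneg (mul_nonneg hq hδ.le) (norm_nonneg (p.1 - p.2))]
          rwa [hqδ] at h3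
        linarith
      calc |∫ z, f z ∂α - ∫ z, f z ∂β| = |∫ p, (f p.1 - f p.2) ∂γ| := by
            rw [hf1, hf2, integral_sub hint1 hint2]
      _ ≤ ∫ p, |f p.1 - f p.2| ∂γ := by
            simpa [Real.norm_eq_abs] using
              norm_integral_le_integral_norm (fun p : Rd d × Rd d => f p.1 - f p.2) (μ := γ)
      _ ≤ ∫ p, (L * δ + L / δ * ‖p.1 - p.2‖ ^ 2) ∂γ := by
            apply integral_mono (hint1.sub hint2).abs
              ((integrable_const (L * δ)).add (hcosti.const_mul (L / δ))) hpt
      _ = L * δ + L / δ * ∫ p, ‖p.1 - p.2‖ ^ 2 ∂γ := by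
            rw [integral_add (integrable_const _) (hcosti.const_mul _), integral_const,
              integral_const_mul]
            simp
      _ ≤ L * δ + L / δ * δ ^ 2 := by
            have hq : 0 ≤ L / δ := div_nonneg hL hδ.le
            have h0 : (0:ℝ) ≤ ∫ p, ‖p.1 - p.2‖ ^ 2 ∂γ := integral_nonneg fun p => by positivity
            nlinarith [hcost.le]
      _ ≤ ε := by
            have hδe : δ * (2 * (L + 1)) = ε := by
              rw [hδdef]; field_simp
            have : L / δ * δ ^ 2 = L * δ := by field_simp
            rw [this]
            nlinarith [hδ.le]
    have h0 : |∫ z, f z ∂α - ∫ z, f z ∂β| ≤ 0 := by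
      by_contra hcon
      push_neg at hcon
      have := habs (|∫ z, f z ∂α - ∫ z, f z ∂β| / 2) (by linarith)
      linarith
    have := abs_nonneg (∫ z, f z ∂α - ∫ z, f z ∂β)
    have heq : |∫ z, f z ∂α - ∫ z, f z ∂β| = 0 := le_antisymm h0 this
    have := abs_eq_zero.1 heq
    linarith [sub_eq_zero.1 this]
  have hclosed : ∀ s : Set (Rd d), IsClosed s → α s = β s := by
    intro s hs
    rcases s.eq_empty_or_nonempty with rfl | hne
    · simp
    · set F : ℕ → Rd d → ℝ := fun n z => max (1 - (n : ℝ) * infDist z s) 0 with hF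
      have hFc : ∀ n, Continuous (F n) := fun n =>
        (continuous_const.sub (continuous_const.mul (continuous_infDist_pt s))).max
          continuous_const
      have hFb : ∀ n z, |F n z| ≤ 1 := by
        intro n z
        rw [abs_of_nonneg (le_max_right _ _)]
        apply max_le _ zero_le_one
        have h1 : 0 ≤ (n : ℝ) * infDist z s :=
          mul_nonneg (Nat.cast_nonneg n) infDist_nonneg
        linarith
      have hFl : ∀ n (z w : Rd d), |F n z - F n w| ≤ (n : ℝ) * ‖z - w‖ := by
        intro n z w
        have hd : |infDist z s - infDist w s| ≤ ‖z - w‖ := by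
          rw [abs_sub_le_iff]
          constructor
          · have := infDist_le_infDist_add_dist (x := z) (y := w) (s := s)
            rw [dist_eq_norm] at this; linarith
          · have := infDist_le_infDist_add_dist (x := w) (y := z) (s := s)
            rw [dist_eq_norm, norm_sub_rev] at this; linarith
        calc |F n z - F n w|
            ≤ |(1 - (n : ℝ) * infDist z s) - (1 - (n : ℝ) * infDist w s)| :=
              abs_max_sub_max_le_abs _ _ _
        _ = (n : ℝ) * |infDist z s - infDist w s| := by
              rw [show (1 - (n : ℝ) * infDist z s) - (1 - (n : ℝ) * infDist w s)
                  = (n : ℝ) * (infDist w s - infDist z s) by ring, abs_mul,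
                Nat.abs_cast, abs_sub_comm]
        _ ≤ (n : ℝ) * ‖z - w‖ := mul_le_mul_of_nonneg_left hd (Nat.cast_nonneg n)
      have heq : ∀ n, ∫ z, F n z ∂α = ∫ z, F n z ∂β := fun n =>
        key (F n) n (Nat.cast_nonneg n) (hFc n) (hFb n) (hFl n)
      have hlim : ∀ (μ : Measure (Rd d)), IsProbabilityMeasure μ →
          Tendsto (fun n => ∫ z, F n z ∂μ) atTop
            (𝓝 (∫ z, s.indicator (fun _ => (1:ℝ)) z ∂μ)) := by
        intro μ hμ
        haveI := hμ
        apply tendsto_integral_of_dominated_convergence (bound := fun _ => (1:ℝ))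
        · exact fun n => (hFc n).aestronglyMeasurable
        · exact integrable_const 1
        · intro n; filter_upwards with z; simpa [Real.norm_eq_abs] using hFb n z
        · filter_upwards with z
          by_cases hz : z ∈ s
          · have hzv : ∀ n, F n z = 1 := fun n => by
              simp [hF, infDist_zero_of_mem hz]
            rw [Set.indicator_of_mem hz]
            simp only [hzv]
            exact tendsto_const_nhds
          · have hd : 0 < infDist z s := (hs.notMem_iff_infDist_pos hne).1 hz
            rw [Set.indicator_of_notMem hz]
            obtain ⟨N, hN⟩ := exists_nat_ge (1 / infDist z s)
            have hev : ∀ᶠ n in atTop, F n z = 0 := by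
              filter_upwards [eventually_ge_atTop N] with n hn
              have hn' : 1 / infDist z s ≤ (n : ℝ) := hN.trans (Nat.cast_le.2 hn)
              have : 1 ≤ (n : ℝ) * infDist z s := by
                rw [div_le_iff₀ hd] at hn'
                linarith
              simp only [hF]
              apply max_eq_right
              linarith
            exact Tendsto.congr' (hev.mono fun n hn => hn.symm) tendsto_const_nhds
      have h1 := (hlim α hα.1).congr heq
      have h2 := hlim β hβ.1
      have hind := tendsto_nhds_unique h1 h2
      rw [integral_indicator_const (1:ℝ) hs.measurableSet,
        integral_indicator_const (1:ℝ) hs.measurableSet] at hind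
      simp only [smul_eq_mul, mul_one] at hind
      exact (ENNReal.toReal_eq_toReal_iff' (measure_ne_top α s) (measure_ne_top β s)).1 hind
  refine MeasureTheory.ext_of_generate_finite {s : Set (Rd d) | IsClosed s} ?_ ?_
    (fun s hs => hclosed s hs) (by simp)
  · rw [BorelSpace.measurable_eq (α := Rd d)]
    exact borel_eq_generateFrom_isClosed
  · intro s hs t ht _
    exact hs.inter ht

end Aux2

open scoped Topology in
set_option maxHeartbeats 1000000 in
/-- with `λ = 5M/2 + K`, the map `Φ_{α₀}(α)_t = (X_t^α)_# α₀` is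
`½`-Lipschitz on `E_T` for the distance `sup_t e^{−λt} W₂`, and admits a unique fixed
point in `E_T`. -/
theorem stmt3 {d : ℕ} (B : Measure (Rd d) → Rd d → Rd d) (C R0 T K M : ℝ)
    (hC : 0 < C) (hR0 : 0 < R0) (hT : 0 < T) (hK : 0 ≤ K) (hM : 0 ≤ M)
    (h1 : H1 B C)
    (h2 : LipOnBall B ((R0 + 1) * Real.exp (C * T)) K)
    (h3 : W2LipOnBall B ((R0 + 1) * Real.exp (C * T)) M)
    (α0 : Measure (Rd d)) (hα0 : ProbOn α0 R0)
    (X : (ℝ → Measure (Rd d)) → ℝ → Rd d → Rd d)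
    (hX : ∀ a : ℝ → Measure (Rd d), InE T ((R0 + 1) * Real.exp (C * T)) a → ∀ x,
      X a 0 x = x ∧ ∀ t ∈ Icc (0:ℝ) T,
        HasDerivAt (fun s => X a s x) (B (a t) (X a t x)) t) :
    (∀ a₁ a₂ : ℝ → Measure (Rd d),
      InE T ((R0 + 1) * Real.exp (C * T)) a₁ → InE T ((R0 + 1) * Real.exp (C * T)) a₂ →
      curveDist (5 * M / 2 + K) T (fun t => α0.map (X a₁ t)) (fun t => α0.map (X a₂ t))
        ≤ (1 / 2) * curveDist (5 * M / 2 + K) T a₁ a₂) ∧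
    ∃ a : ℝ → Measure (Rd d), InE T ((R0 + 1) * Real.exp (C * T)) a ∧
      (∀ t ∈ Icc (0:ℝ) T, α0.map (X a t) = a t) ∧
      ∀ b : ℝ → Measure (Rd d), InE T ((R0 + 1) * Real.exp (C * T)) b →
        (∀ t ∈ Icc (0:ℝ) T, α0.map (X b t) = b t) →
        ∀ t ∈ Icc (0:ℝ) T, b t = a t := by
  have hT0 : (0:ℝ) ≤ T := hT.le
  set R1 : ℝ := (R0 + 1) * Real.exp (C * T) with hR1def
  set lam : ℝ := 5 * M / 2 + K with hlamdef
  have hexpCT : 1 ≤ Real.exp (C * T) := Real.one_le_exp (by positivity)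
  have hR1' : R0 + 1 ≤ R1 := by rw [hR1def]; nlinarith
  have hR1pos : 0 < R1 := by linarith
  have hlam : 0 ≤ lam := by rw [hlamdef]; linarith
  have hKlam : K ≤ lam := by rw [hlamdef]; linarith
  haveI hα0P : IsProbabilityMeasure α0 := hα0.1
  have aeBall : ∀ᵐ z ∂α0, z ∈ Metric.closedBall (0 : Rd d) R0 := by
    rw [MeasureTheory.ae_iff]
    exact hα0.2
  have cptOf : ∀ a : ℝ → Measure (Rd d), InE T R1 a → ∀ s ∈ Icc (0:ℝ) T, IsCptProb (a s) :=
    fun a ha s hs => ⟨(ha.1 s hs).1, R1, (ha.1 s hs).2⟩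
  -- Gronwall bound on the flow
  have flowA : ∀ a, InE T R1 a → ∀ x ∈ Metric.closedBall (0:Rd d) R0, ∀ t ∈ Icc (0:ℝ) T,
      ‖X a t x‖ ≤ (R0 + 1) * Real.exp (C * t) - 1 := by
    intro a ha x hx t ht
    have hXa := hX a ha
    have hcont : ContinuousOn (fun s => X a s x) (Icc (0:ℝ) T) := fun s hs =>
      ((hXa x).2 s hs).continuousAt.continuousWithinAt
    have hder : ∀ s ∈ Ico (0:ℝ) T, HasDerivWithinAt (fun s => X a s x)
        (B (a s) (X a s x)) (Ici s) s := fun s hs =>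
      ((hXa x).2 s ⟨hs.1, hs.2.le⟩).hasDerivWithinAt
    have hbound : ∀ s ∈ Ico (0:ℝ) T, ‖B (a s) (X a s x)‖ ≤ C * ‖X a s x‖ + C := by
      intro s hs
      have hb := h1 (a s) (cptOf a ha s ⟨hs.1, hs.2.le⟩) (X a s x)
      nlinarith [hb]
    have h0 : ‖(fun s => X a s x) 0‖ ≤ R0 := by
      simp only [(hXa x).1]
      rwa [mem_closedBall, dist_zero_right] at hx
    have hmain := norm_le_gronwallBound_of_norm_deriv_right_le hcont hder h0 hbound t ht
    rw [gronwallBound_of_K_ne_0 (ne_of_gt hC)] at hmain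
    have hCC : C / C = 1 := div_self (ne_of_gt hC)
    rw [sub_zero] at hmain
    calc ‖X a t x‖ ≤ R0 * Real.exp (C * t) + C / C * (Real.exp (C * t) - 1) := hmain
    _ = (R0 + 1) * Real.exp (C * t) - 1 := by rw [hCC]; ring
  have flowA'' : ∀ a, InE T R1 a → ∀ x ∈ Metric.closedBall (0:Rd d) R0, ∀ t ∈ Icc (0:ℝ) T,
      ‖X a t x‖ ≤ R1 := by
    intro a ha x hx t ht
    have h0 := flowA a ha x hx t ht
    have hmono : Real.exp (C * t) ≤ Real.exp (C * T) := Real.exp_le_exp.2 (by nlinarith [ht.2])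
    have : (R0 + 1) * Real.exp (C * t) ≤ R1 := by rw [hR1def]; nlinarith
    linarith
  have flowA' : ∀ a, InE T R1 a → ∀ x ∈ Metric.closedBall (0:Rd d) R0, ∀ t ∈ Icc (0:ℝ) T,
      X a t x ∈ Metric.closedBall (0:Rd d) R1 := by
    intro a ha x hx t ht
    rw [mem_closedBall, dist_zero_right]
    exact flowA'' a ha x hx t ht
  -- Gronwall comparison of two flows
  have flowB : ∀ a₁ a₂, InE T R1 a₁ → InE T R1 a₂ → ∀ D : ℝ, 0 ≤ D →
      (∀ s ∈ Icc (0:ℝ) T, W2 (a₁ s) (a₂ s) ≤ Real.exp (lam * s) * D) →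
      ∀ x ∈ Metric.closedBall (0:Rd d) R0, ∀ y ∈ Metric.closedBall (0:Rd d) R0,
      ∀ t ∈ Icc (0:ℝ) T,
      ‖X a₁ t x - X a₂ t y‖ ≤ Real.exp (K * t) * ‖x - y‖
        + 2 / 5 * D * (Real.exp (lam * t) - Real.exp (K * t)) := by
    intro a₁ a₂ h₁ h₂ D hD hW x hx y hy t ht
    have hmain : ∀ η > (0:ℝ), ‖X a₁ t x - X a₂ t y‖ ≤ Real.exp (K * t) * ‖x - y‖
        + 2 / 5 * D * (Real.exp (lam * t) - Real.exp (K * t))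
        + η * Real.exp ((K + 1) * t) := by
      intro η hη
      have hf' : ∀ s ∈ Ico (0:ℝ) T, HasDerivWithinAt (fun s => X a₁ s x - X a₂ s y)
          (B (a₁ s) (X a₁ s x) - B (a₂ s) (X a₂ s y)) (Ici s) s := fun s hs =>
        (((hX a₁ h₁ x).2 s ⟨hs.1, hs.2.le⟩).sub
          ((hX a₂ h₂ y).2 s ⟨hs.1, hs.2.le⟩)).hasDerivWithinAt
      have hfc : ContinuousOn (fun s => X a₁ s x - X a₂ s y) (Icc (0:ℝ) T) := fun s hs =>
        (((hX a₁ h₁ x).2 s hs).sub ((hX a₂ h₂ y).2 s hs)).continuousAt.continuousWithinAt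
      have hB' : ∀ s, HasDerivAt
          (fun s => Real.exp (K * s) * ‖x - y‖
            + 2 / 5 * D * (Real.exp (lam * s) - Real.exp (K * s))
            + η * Real.exp ((K + 1) * s))
          (K * Real.exp (K * s) * ‖x - y‖
            + 2 / 5 * D * (lam * Real.exp (lam * s) - K * Real.exp (K * s))
            + η * ((K + 1) * Real.exp ((K + 1) * s))) s := by
        intro s
        exact (((SG_hasDerivAt_exp_mul K s).mul_const ‖x - y‖).add
          (((SG_hasDerivAt_exp_mul lam s).sub (SG_hasDerivAt_exp_mul K s)).const_mul
            (2 / 5 * D))).add ((SG_hasDerivAt_exp_mul (K + 1) s).const_mul η)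
      have ha0 : ‖(fun s => X a₁ s x - X a₂ s y) 0‖ ≤ Real.exp (K * 0) * ‖x - y‖
          + 2 / 5 * D * (Real.exp (lam * 0) - Real.exp (K * 0))
          + η * Real.exp ((K + 1) * 0) := by
        simp only [(hX a₁ h₁ x).1, (hX a₂ h₂ y).1, mul_zero, Real.exp_zero]
        nlinarith [norm_nonneg (x - y)]
      have hbd : ∀ s ∈ Ico (0:ℝ) T, ‖(fun s => X a₁ s x - X a₂ s y) s‖ =
          (Real.exp (K * s) * ‖x - y‖
            + 2 / 5 * D * (Real.exp (lam * s) - Real.exp (K * s))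
            + η * Real.exp ((K + 1) * s)) →
          ‖B (a₁ s) (X a₁ s x) - B (a₂ s) (X a₂ s y)‖ <
          (K * Real.exp (K * s) * ‖x - y‖
            + 2 / 5 * D * (lam * Real.exp (lam * s) - K * Real.exp (K * s))
            + η * ((K + 1) * Real.exp ((K + 1) * s))) := by
        intro s hs heq
        have hsI : s ∈ Icc (0:ℝ) T := ⟨hs.1, hs.2.le⟩
        have hx1 : X a₁ s x ∈ Metric.closedBall (0:Rd d) R1 := flowA' a₁ h₁ x hx s hsI
        have hy2 : X a₂ s y ∈ Metric.closedBall (0:Rd d) R1 := flowA' a₂ h₂ y hy s hsI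
        have p₁ := h₁.1 s hsI
        have p₂ := h₂.1 s hsI
        have hlip := h2 (a₁ s) p₁ (X a₁ s x) hx1 (X a₂ s y) hy2
        have hwass := h3 (a₁ s) (a₂ s) p₁ p₂ (X a₂ s y) hy2
        have hWs := hW s hsI
        have htri : ‖B (a₁ s) (X a₁ s x) - B (a₂ s) (X a₂ s y)‖ ≤
            ‖B (a₁ s) (X a₁ s x) - B (a₁ s) (X a₂ s y)‖
            + ‖B (a₁ s) (X a₂ s y) - B (a₂ s) (X a₂ s y)‖ := by
          have := norm_add_le (B (a₁ s) (X a₁ s x) - B (a₁ s) (X a₂ s y))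
            (B (a₁ s) (X a₂ s y) - B (a₂ s) (X a₂ s y))
          rwa [sub_add_sub_cancel] at this
        have hKb : K * ‖X a₁ s x - X a₂ s y‖ =
            K * ‖(fun s => X a₁ s x - X a₂ s y) s‖ := rfl
        have hfin : ‖B (a₁ s) (X a₁ s x) - B (a₂ s) (X a₂ s y)‖ ≤
            K * ‖(fun s => X a₁ s x - X a₂ s y) s‖ + M * (Real.exp (lam * s) * D) := by
          have hMW : M * W2 (a₁ s) (a₂ s) ≤ M * (Real.exp (lam * s) * D) :=
            mul_le_mul_of_nonneg_left hWs hM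
          calc ‖B (a₁ s) (X a₁ s x) - B (a₂ s) (X a₂ s y)‖
              ≤ K * ‖X a₁ s x - X a₂ s y‖ + M * W2 (a₁ s) (a₂ s) := by
                have := add_le_add hlip hwass
                linarith [htri]
          _ ≤ K * ‖(fun s => X a₁ s x - X a₂ s y) s‖ + M * (Real.exp (lam * s) * D) := by
                rw [← hKb]; linarith
        rw [heq] at hfin
        have hηpos : 0 < η * Real.exp ((K + 1) * s) :=
          mul_pos hη (Real.exp_pos _)
        have hlamK : 2 / 5 * (lam - K) = M := by rw [hlamdef]; ring
        rw [← hlamK] at hfin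
        nlinarith [hfin, hηpos]
      have := image_norm_le_of_norm_deriv_right_lt_deriv_boundary hfc hf' ha0 hB' hbd ht
      exact this
    by_contra hcon
    push_neg at hcon
    have hkey : ∀ A e : ℝ, 0 < e → A / (2 * e) * e = A / 2 := by
      intro A e he
      field_simp
    have hε : 0 < ‖X a₁ t x - X a₂ t y‖ - (Real.exp (K * t) * ‖x - y‖
        + 2 / 5 * D * (Real.exp (lam * t) - Real.exp (K * t))) := by linarith
    have hη : 0 < (‖X a₁ t x - X a₂ t y‖ - (Real.exp (K * t) * ‖x - y‖
        + 2 / 5 * D * (Real.exp (lam * t) - Real.exp (K * t))))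
        / (2 * Real.exp ((K + 1) * t)) := by positivity
    have hb2 := hmain _ hη
    rw [hkey _ _ (Real.exp_pos _)] at hb2
    linarith
  -- spatial Lipschitz bound
  have flowLip : ∀ a, InE T R1 a → ∀ t ∈ Icc (0:ℝ) T, ∀ x ∈ Metric.closedBall (0:Rd d) R0,
      ∀ y ∈ Metric.closedBall (0:Rd d) R0,
      ‖X a t x - X a t y‖ ≤ Real.exp (K * t) * ‖x - y‖ := by
    intro a ha t ht x hx y hy
    have := flowB a a ha ha 0 le_rfl (fun s _ => by rw [SG_w2_self]; simp) x hx y hy t ht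
    simpa using this
  -- projection onto the ball of radius R0
  set pj : Rd d → Rd d := fun z => (R0 / max R0 ‖z‖) • z with hpjdef
  have hmaxpos : ∀ z : Rd d, 0 < max R0 ‖z‖ := fun z =>
    lt_of_lt_of_le hR0 (le_max_left _ _)
  have hpjmem : ∀ z, pj z ∈ Metric.closedBall (0:Rd d) R0 := by
    intro z
    rw [mem_closedBall, dist_zero_right, hpjdef]
    simp only
    rw [norm_smul, Real.norm_eq_abs, abs_of_nonneg (by positivity)]
    calc R0 / max R0 ‖z‖ * ‖z‖ ≤ R0 / max R0 ‖z‖ * max R0 ‖z‖ := by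
          apply mul_le_mul_of_nonneg_left (le_max_right _ _) (by positivity)
    _ = R0 := div_mul_cancel₀ _ (ne_of_gt (hmaxpos z))
  have hpjid : ∀ z ∈ Metric.closedBall (0:Rd d) R0, pj z = z := by
    intro z hz
    rw [mem_closedBall, dist_zero_right] at hz
    rw [hpjdef]
    simp only
    rw [max_eq_left hz, div_self (ne_of_gt hR0), one_smul]
  have hpjcont : Continuous pj := by
    exact Continuous.smul (continuous_const.div (continuous_const.max continuous_norm)
      (fun z => ne_of_gt (hmaxpos z))) continuous_id
  -- a.e. measurability of the flow maps
  have contBall : ∀ a, InE T R1 a → ∀ t ∈ Icc (0:ℝ) T,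
      ContinuousOn (X a t) (Metric.closedBall (0:Rd d) R0) := by
    intro a ha t ht
    apply LipschitzOnWith.continuousOn (K := Real.toNNReal (Real.exp (K * t)))
    apply LipschitzOnWith.of_dist_le_mul
    intro z hz w hw
    rw [dist_eq_norm, dist_eq_norm, Real.coe_toNNReal _ (Real.exp_nonneg _)]
    exact flowLip a ha t ht z hz w hw
  have aemX : ∀ a, InE T R1 a → ∀ t ∈ Icc (0:ℝ) T, AEMeasurable (X a t) α0 := by
    intro a ha t ht
    have hcont : Continuous (fun z => X a t (pj z)) :=
      (contBall a ha t ht).comp_continuous hpjcont hpjmem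
    apply hcont.aemeasurable.congr
    filter_upwards [aeBall] with z hz
    rw [hpjid z hz]
  -- time regularity of the flow
  have flowT : ∀ a, InE T R1 a → ∀ x ∈ Metric.closedBall (0:Rd d) R0,
      ∀ s ∈ Icc (0:ℝ) T, ∀ t ∈ Icc (0:ℝ) T,
      ‖X a t x - X a s x‖ ≤ C * (1 + R1) * |t - s| := by
    intro a ha x hx s hs t ht
    have main : ∀ u v : ℝ, u ∈ Icc (0:ℝ) T → v ∈ Icc (0:ℝ) T → u ≤ v →
        ‖X a v x - X a u x‖ ≤ C * (1 + R1) * (v - u) := by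
      intro u v hu hv huv
      have hsub : Icc u v ⊆ Icc (0:ℝ) T := Icc_subset_Icc hu.1 hv.2
      have := norm_image_sub_le_of_norm_deriv_right_le_segment
        (f := fun r => X a r x) (f' := fun r => B (a r) (X a r x)) (C := C * (1 + R1))
        (fun r hr => ((hX a ha x).2 r (hsub hr)).continuousAt.continuousWithinAt)
        (fun r hr => ((hX a ha x).2 r (hsub ⟨hr.1, hr.2.le⟩)).hasDerivWithinAt)
        ?_ v (right_mem_Icc.2 huv)
      · exact this
      · intro r hr
        have hrI : r ∈ Icc (0:ℝ) T := hsub ⟨hr.1, hr.2.le⟩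
        have hb := h1 (a r) (cptOf a ha r hrI) (X a r x)
        have hn := flowA'' a ha x hx r hrI
        calc ‖B (a r) (X a r x)‖ ≤ C * (1 + ‖X a r x‖) := hb
        _ ≤ C * (1 + R1) := by nlinarith
    rcases le_total s t with h | h
    · have := main s t hs ht h
      rwa [abs_of_nonneg (by linarith)]
    · have := main t s ht hs h
      rw [abs_sub_comm, abs_of_nonneg (by linarith), norm_sub_rev]
      exact this
  -- the Picard map sends E_T into E_T
  have phiMem : ∀ a, InE T R1 a → InE T R1 (fun t => α0.map (X a t)) := by
    intro a ha
    constructor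
    · intro t ht
      refine ⟨Measure.isProbabilityMeasure_map (aemX a ha t ht), ?_⟩
      show (α0.map (X a t)) (Metric.closedBall (0:Rd d) R1)ᶜ = 0
      rw [Measure.map_apply_of_aemeasurable (aemX a ha t ht) measurableSet_closedBall.compl]
      apply measure_mono_null _ hα0.2
      intro z hz
      simp only [Set.mem_preimage, Set.mem_compl_iff] at hz ⊢
      intro hzball
      exact hz (flowA' a ha z hzball t ht)
    · intro t ht δ hδ
      refine ⟨δ / (C * (1 + R1) + 1), by positivity, ?_⟩
      intro s hs hst
      have hb : W2 (α0.map (X a s)) (α0.map (X a t)) ≤ C * (1 + R1) * |s - t| := by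
        apply SG_w2_map_le hα0P (aemX a ha s hs) (aemX a ha t ht) (by positivity)
        filter_upwards [aeBall] with z hz
        exact flowT a ha z hz t ht s hs
      have hA : (0:ℝ) ≤ C * (1 + R1) := by positivity
      have hAinv : (C * (1 + R1) + 1) * (δ / (C * (1 + R1) + 1)) = δ :=
        mul_div_cancel₀ _ (by positivity)
      have hq : 0 < δ / (C * (1 + R1) + 1) := by positivity
      have hmul : C * (1 + R1) * |s - t| ≤ C * (1 + R1) * (δ / (C * (1 + R1) + 1)) :=
        mul_le_mul_of_nonneg_left hst.le hA
      calc W2 (α0.map (X a s)) (α0.map (X a t)) ≤ C * (1 + R1) * |s - t| := hb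
      _ < δ := by linarith
  -- the contraction estimate
  have contract : ∀ a₁ a₂, InE T R1 a₁ → InE T R1 a₂ →
      curveDist lam T (fun t => α0.map (X a₁ t)) (fun t => α0.map (X a₂ t))
        ≤ 1 / 2 * curveDist lam T a₁ a₂ := by
    intro a₁ a₂ h₁ h₂
    have hD0 : 0 ≤ curveDist lam T a₁ a₂ :=
      SG_curveDist_nonneg hlam hR1pos.le hT0 h₁.1 h₂.1
    apply SG_curveDist_le (by linarith)
    intro t ht
    have hW : ∀ s ∈ Icc (0:ℝ) T, W2 (a₁ s) (a₂ s) ≤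
        Real.exp (lam * s) * curveDist lam T a₁ a₂ :=
      fun s hs => SG_w2_le_curveDist hlam hR1pos.le h₁.1 h₂.1 hs
    have hEt : Real.exp (K * t) ≤ Real.exp (lam * t) :=
      Real.exp_le_exp.2 (by nlinarith [ht.1])
    have hw2 : W2 (α0.map (X a₁ t)) (α0.map (X a₂ t))
        ≤ 2 / 5 * curveDist lam T a₁ a₂ * (Real.exp (lam * t) - Real.exp (K * t)) := by
      apply SG_w2_map_le hα0P (aemX a₁ h₁ t ht) (aemX a₂ h₂ t ht) (by nlinarith)
      filter_upwards [aeBall] with z hz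
      have := flowB a₁ a₂ h₁ h₂ _ hD0 hW z hz z hz t ht
      simpa using this
    have hinv : Real.exp (-lam * t) * Real.exp (lam * t) = 1 := by
      rw [← Real.exp_add]; simp
    have hKpos := Real.exp_pos (K * t)
    calc Real.exp (-lam * t) * W2 (α0.map (X a₁ t)) (α0.map (X a₂ t))
        ≤ Real.exp (-lam * t) *
          (2 / 5 * curveDist lam T a₁ a₂ * (Real.exp (lam * t) - Real.exp (K * t))) :=
          mul_le_mul_of_nonneg_left hw2 (Real.exp_nonneg _)
    _ ≤ Real.exp (-lam * t) * (2 / 5 * curveDist lam T a₁ a₂ * Real.exp (lam * t)) := by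
          apply mul_le_mul_of_nonneg_left _ (Real.exp_nonneg _)
          nlinarith
    _ = 2 / 5 * curveDist lam T a₁ a₂ := by
          rw [show Real.exp (-lam * t) * (2 / 5 * curveDist lam T a₁ a₂ * Real.exp (lam * t))
            = 2 / 5 * curveDist lam T a₁ a₂ * (Real.exp (-lam * t) * Real.exp (lam * t)) by ring,
            hinv, mul_one]
    _ ≤ 1 / 2 * curveDist lam T a₁ a₂ := by linarith
  refine ⟨contract, ?_⟩
  -- Picard iteration
  have hbase : InE T R1 (fun _ => α0) := by
    constructor
    · intro t _
      exact ⟨hα0P, measure_mono_null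
        (compl_subset_compl.2 (closedBall_subset_closedBall (by linarith))) hα0.2⟩
    · intro t _ δ hδ
      exact ⟨1, one_pos, fun s _ _ => by rw [SG_w2_self]; exact hδ⟩
  let aseq : ℕ → ℝ → Measure (Rd d) := fun n =>
    Nat.rec (fun _ => α0) (fun _ ih => fun t => α0.map (X ih t)) n
  have haseqS : ∀ n, aseq (n + 1) = fun t => α0.map (X (aseq n) t) := fun n => rfl
  have hmem : ∀ n, InE T R1 (aseq n) := by
    intro n
    induction n with
    | zero => exact hbase
    | succ n ih => exact phiMem (aseq n) ih
  set D0 : ℝ := curveDist lam T (aseq 0) (aseq 1) with hD0def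
  have hD0n : 0 ≤ D0 := SG_curveDist_nonneg hlam hR1pos.le hT0 (hmem 0).1 (hmem 1).1
  have hgeo : ∀ n, curveDist lam T (aseq n) (aseq (n + 1)) ≤ (1/2)^n * D0 := by
    intro n
    induction n with
    | zero => rw [pow_zero, one_mul]; exact le_refl D0
    | succ n ih =>
      have hc := contract (aseq n) (aseq (n + 1)) (hmem n) (hmem (n + 1))
      rw [← haseqS n, ← haseqS (n + 1)] at hc
      calc curveDist lam T (aseq (n + 1)) (aseq (n + 2))
          ≤ 1 / 2 * curveDist lam T (aseq n) (aseq (n + 1)) := hc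
      _ ≤ 1 / 2 * ((1/2)^n * D0) := by linarith
      _ = (1/2)^(n+1) * D0 := by ring
  set Q : ℝ := 2 / 5 * D0 * Real.exp (lam * T) with hQdef
  have hQ0 : 0 ≤ Q := by rw [hQdef]; positivity
  have hexpd : ∀ t ∈ Icc (0:ℝ) T,
      0 ≤ Real.exp (lam * t) - Real.exp (K * t) ∧
      Real.exp (lam * t) - Real.exp (K * t) ≤ Real.exp (lam * T) := by
    intro t ht
    constructor
    · have := Real.exp_le_exp.2 (show K * t ≤ lam * t by nlinarith [ht.1])
      linarith
    · have h1' : Real.exp (lam * t) ≤ Real.exp (lam * T) :=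
        Real.exp_le_exp.2 (by nlinarith [ht.2])
      nlinarith [Real.exp_pos (K * t)]
  have hstep : ∀ n, ∀ t ∈ Icc (0:ℝ) T, ∀ z ∈ Metric.closedBall (0:Rd d) R0,
      ‖X (aseq n) t z - X (aseq (n + 1)) t z‖ ≤ Q * (1/2)^n := by
    intro n t ht z hz
    have hDn := SG_curveDist_nonneg hlam hR1pos.le hT0 (hmem n).1 (hmem (n + 1)).1
    have hW : ∀ s ∈ Icc (0:ℝ) T, W2 (aseq n s) (aseq (n + 1) s) ≤
        Real.exp (lam * s) * curveDist lam T (aseq n) (aseq (n + 1)) :=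
      fun s hs => SG_w2_le_curveDist hlam hR1pos.le (hmem n).1 (hmem (n + 1)).1 hs
    have hfb := flowB (aseq n) (aseq (n + 1)) (hmem n) (hmem (n + 1)) _ hDn hW z hz z hz t ht
    simp only [sub_self, norm_zero, mul_zero, zero_add] at hfb
    have hed := hexpd t ht
    have hpow : (0:ℝ) ≤ (1/2)^n * D0 := by positivity
    calc ‖X (aseq n) t z - X (aseq (n + 1)) t z‖
        ≤ 2 / 5 * curveDist lam T (aseq n) (aseq (n + 1))
          * (Real.exp (lam * t) - Real.exp (K * t)) := hfb
    _ ≤ 2 / 5 * ((1/2)^n * D0) * Real.exp (lam * T) := by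
        apply mul_le_mul (by nlinarith [hgeo n]) hed.2 hed.1 (by positivity)
    _ = Q * (1/2)^n := by rw [hQdef]; ring
  -- the limit flow
  have hcauchy : ∀ t ∈ Icc (0:ℝ) T, ∀ z : Rd d, ∃ L : Rd d,
      Tendsto (fun n => X (aseq n) t (pj z)) atTop (𝓝 L) := by
    intro t ht z
    apply cauchySeq_tendsto_of_complete
    apply cauchySeq_of_le_geometric (1/2) Q (by norm_num)
    intro n
    rw [dist_eq_norm]
    exact hstep n t ht (pj z) (hpjmem z)
  set Y : ℝ → Rd d → Rd d := fun t z => limUnder atTop (fun n => X (aseq n) t (pj z))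
    with hYdef
  have hYtend : ∀ t ∈ Icc (0:ℝ) T, ∀ z : Rd d,
      Tendsto (fun n => X (aseq n) t (pj z)) atTop (𝓝 (Y t z)) := by
    intro t ht z
    obtain ⟨L, hL⟩ := hcauchy t ht z
    have : Y t z = L := hL.limUnder_eq
    rw [this]
    exact hL
  have hYdist : ∀ t ∈ Icc (0:ℝ) T, ∀ z : Rd d, ∀ n,
      ‖X (aseq n) t (pj z) - Y t z‖ ≤ Q * (1/2)^n / (1 - 1/2) := by
    intro t ht z n
    rw [← dist_eq_norm]
    exact dist_le_of_le_geometric_of_tendsto (1/2) Q (by norm_num)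
      (fun m => by rw [dist_eq_norm]; exact hstep m t ht (pj z) (hpjmem z))
      (hYtend t ht z) n
  have hYproj : ∀ t z, Y t (pj z) = Y t z := by
    intro t z
    show limUnder atTop (fun n => X (aseq n) t (pj (pj z)))
      = limUnder atTop (fun n => X (aseq n) t (pj z))
    rw [hpjid (pj z) (hpjmem z)]
  have hYR1 : ∀ t ∈ Icc (0:ℝ) T, ∀ z : Rd d, ‖Y t z‖ ≤ R1 := by
    intro t ht z
    apply le_of_tendsto (hYtend t ht z).norm
    filter_upwards with n
    exact flowA'' (aseq n) (hmem n) (pj z) (hpjmem z) t ht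
  have hYcont : ∀ t ∈ Icc (0:ℝ) T, Continuous (Y t) := by
    intro t ht
    have hlip : ∀ z ∈ Metric.closedBall (0:Rd d) R0, ∀ w ∈ Metric.closedBall (0:Rd d) R0,
        ‖Y t z - Y t w‖ ≤ Real.exp (K * t) * ‖z - w‖ := by
      intro z hz w hw
      apply le_of_tendsto ((hYtend t ht z).sub (hYtend t ht w)).norm
      filter_upwards with n
      rw [hpjid z hz, hpjid w hw]
      exact flowLip (aseq n) (hmem n) t ht z hz w hw
    have hcoY : ContinuousOn (Y t) (Metric.closedBall (0:Rd d) R0) := by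
      apply LipschitzOnWith.continuousOn (K := Real.toNNReal (Real.exp (K * t)))
      apply LipschitzOnWith.of_dist_le_mul
      intro z hz w hw
      rw [dist_eq_norm, dist_eq_norm, Real.coe_toNNReal _ (Real.exp_nonneg _)]
      exact hlip z hz w hw
    have heqY : Y t = fun z => Y t (pj z) := by
      funext z
      rw [hYproj t z]
    rw [heqY]
    exact hcoY.comp_continuous hpjcont hpjmem
  set acurve : ℝ → Measure (Rd d) := fun t => α0.map (Y t) with hacdef
  have haInE : InE T R1 acurve := by
    constructor
    · intro t ht
      refine ⟨Measure.isProbabilityMeasure_map (hYcont t ht).aemeasurable, ?_⟩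
      show (α0.map (Y t)) (Metric.closedBall (0:Rd d) R1)ᶜ = 0
      rw [Measure.map_apply_of_aemeasurable (hYcont t ht).aemeasurable
        measurableSet_closedBall.compl]
      have hempty : (Y t) ⁻¹' (Metric.closedBall (0:Rd d) R1)ᶜ = ∅ := by
        ext z
        simp only [Set.mem_preimage, Set.mem_compl_iff, Set.mem_empty_iff_false,
          iff_false, not_not, mem_closedBall, dist_zero_right]
        exact hYR1 t ht z
      rw [hempty]
      simp
    · intro t ht δ hδ
      refine ⟨δ / (C * (1 + R1) + 1), by positivity, ?_⟩
      intro s hs hst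
      have hb : W2 (acurve s) (acurve t) ≤ C * (1 + R1) * |s - t| := by
        apply SG_w2_map_le hα0P (hYcont s hs).aemeasurable (hYcont t ht).aemeasurable
          (by positivity)
        filter_upwards with z
        apply le_of_tendsto ((hYtend s hs z).sub (hYtend t ht z)).norm
        filter_upwards with n
        exact flowT (aseq n) (hmem n) (pj z) (hpjmem z) t ht s hs
      have hAinv : (C * (1 + R1) + 1) * (δ / (C * (1 + R1) + 1)) = δ :=
        mul_div_cancel₀ _ (by positivity)
      have hA : (0:ℝ) ≤ C * (1 + R1) := by positivity
      have hq : 0 < δ / (C * (1 + R1) + 1) := by positivity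
      have hmul : C * (1 + R1) * |s - t| ≤ C * (1 + R1) * (δ / (C * (1 + R1) + 1)) :=
        mul_le_mul_of_nonneg_left hst.le hA
      calc W2 (acurve s) (acurve t) ≤ C * (1 + R1) * |s - t| := hb
      _ < δ := by linarith
  have hW2na : ∀ n, ∀ t ∈ Icc (0:ℝ) T,
      W2 (aseq (n + 1) t) (acurve t) ≤ Q * (1/2)^n / (1 - 1/2) := by
    intro n t ht
    rw [haseqS n]
    apply SG_w2_map_le hα0P (aemX (aseq n) (hmem n) t ht) (hYcont t ht).aemeasurable
      (by positivity)
    filter_upwards [aeBall] with z hz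
    have := hYdist t ht z n
    rwa [hpjid z hz] at this
  -- the fixed point property
  have hfixptwise : ∀ t ∈ Icc (0:ℝ) T, ∀ z ∈ Metric.closedBall (0:Rd d) R0,
      X acurve t z = Y t z := by
    intro t ht z hz
    have hbound : ∀ n : ℕ, ‖X acurve t z - Y t z‖ ≤
        2 / 5 * (Q * (1/2)^n / (1 - 1/2)) * Real.exp (lam * T)
          + Q * (1/2)^(n+1) / (1 - 1/2) := by
      intro n
      have hcn : (0:ℝ) ≤ Q * (1/2)^n / (1 - 1/2) := by positivity
      have hWna : ∀ s ∈ Icc (0:ℝ) T, W2 (aseq (n + 1) s) (acurve s) ≤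
          Real.exp (lam * s) * (Q * (1/2)^n / (1 - 1/2)) := by
        intro s hs
        have h1' := hW2na n s hs
        have hge : (1:ℝ) ≤ Real.exp (lam * s) := Real.one_le_exp (by nlinarith [hs.1])
        nlinarith
      have h2' := flowB (aseq (n + 1)) acurve (hmem (n + 1)) haInE _ hcn hWna z hz z hz t ht
      simp only [sub_self, norm_zero, mul_zero, zero_add] at h2'
      have hed := hexpd t ht
      have h3' : ‖X (aseq (n + 1)) t z - X acurve t z‖ ≤
          2 / 5 * (Q * (1/2)^n / (1 - 1/2)) * Real.exp (lam * T) := by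
        refine h2'.trans ?_
        apply mul_le_mul le_rfl hed.2 hed.1 (by positivity)
      have h4' := hYdist t ht z (n + 1)
      rw [hpjid z hz] at h4'
      calc ‖X acurve t z - Y t z‖
          ≤ ‖X acurve t z - X (aseq (n + 1)) t z‖ + ‖X (aseq (n + 1)) t z - Y t z‖ := by
            have := norm_add_le (X acurve t z - X (aseq (n + 1)) t z)
              (X (aseq (n + 1)) t z - Y t z)
            rwa [sub_add_sub_cancel] at this
      _ ≤ 2 / 5 * (Q * (1/2)^n / (1 - 1/2)) * Real.exp (lam * T)
          + Q * (1/2)^(n+1) / (1 - 1/2) := by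
            apply add_le_add _ h4'
            rwa [norm_sub_rev] at h3'
    have htend : Tendsto (fun n : ℕ =>
        2 / 5 * (Q * (1/2)^n / (1 - 1/2)) * Real.exp (lam * T)
          + Q * (1/2)^(n+1) / (1 - 1/2)) atTop (𝓝 0) := by
      have hp : Tendsto (fun n : ℕ => ((1:ℝ)/2)^n) atTop (𝓝 0) :=
        tendsto_pow_atTop_nhds_zero_of_lt_one (by norm_num) (by norm_num)
      have heq : ∀ n : ℕ,
          2 / 5 * (Q * (1/2)^n / (1 - 1/2)) * Real.exp (lam * T)
            + Q * (1/2)^(n+1) / (1 - 1/2)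
          = (4 / 5 * Q * Real.exp (lam * T) + Q) * (1/2)^n := by
        intro n
        rw [pow_succ]
        ring
      have := hp.const_mul (4 / 5 * Q * Real.exp (lam * T) + Q)
      rw [mul_zero] at this
      exact this.congr fun n => (heq n).symm
    have h0 : ‖X acurve t z - Y t z‖ ≤ 0 := ge_of_tendsto' htend hbound
    exact sub_eq_zero.1 (norm_le_zero_iff.1 h0)
  have hfix : ∀ t ∈ Icc (0:ℝ) T, α0.map (X acurve t) = acurve t := by
    intro t ht
    show α0.map (X acurve t) = α0.map (Y t)
    apply Measure.map_congr
    filter_upwards [aeBall] with z hz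
    exact hfixptwise t ht z hz
  refine ⟨acurve, haInE, hfix, ?_⟩
  -- uniqueness
  intro b hb hbfix t ht
  have hset : curveDist lam T b acurve =
      curveDist lam T (fun t => α0.map (X b t)) (fun t => α0.map (X acurve t)) := by
    show sSup _ = sSup _
    congr 1
    ext c
    constructor
    · rintro ⟨s, hs, rfl⟩
      exact ⟨s, hs, by simp only [hbfix s hs, hfix s hs]⟩
    · rintro ⟨s, hs, rfl⟩
      exact ⟨s, hs, by simp only [hbfix s hs, hfix s hs]⟩
  have hcon := contract b acurve hb haInE
  rw [← hset] at hcon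
  have hD := SG_curveDist_nonneg hlam hR1pos.le hT0 hb.1 haInE.1
  have hD0' : curveDist lam T b acurve ≤ 0 := by linarith
  have hWle := SG_le_curveDist hlam hR1pos.le hb.1 haInE.1 ht
  have hw0 := SG_w2_nonneg (b t) (acurve t)
  have hEW : Real.exp (-lam * t) * W2 (b t) (acurve t) ≤ 0 := le_trans hWle hD0'
  have hWz : W2 (b t) (acurve t) = 0 := by
    have hle : W2 (b t) (acurve t) ≤ 0 := by
      nlinarith [Real.exp_pos (-lam * t)]
    linarith
  exact SG_eq_of_w2_eq_zero hR1pos.le (hb.1 t ht) (haInE.1 t ht) hWz
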